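/- Let d ≥ 2 and 1 ≤ M < N be integers. Then (C(M+d−1, M)/C(N+d−1, M)) · Σ_{i=0}^{M} C(M, i) · C(N−M, M−i) · Σ_{q=0}^{N+i−2M} C(N+i−2M, q) · C(2M−i, N−q) / C(M+d−1−i+q, d−1) = C(M+d−1, M)/C(N+d−1, N). Here the inner sum over q is empty when N+i−2M < 0, and a binomial coefficient C(a, b) is taken to be 0 unless 0 ≤ b ≤ a. -/

import Mathlib

/-- Binomial coefficient of integers, with the convention that `C(a, b) = 0`
unless `0 ≤ b ≤ a`. -/
def ichoose (a b : ℤ) : ℕ := if 0 ≤ b ∧ b ≤ a then Nat.choose a.toNat b.toNat else 0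

lemma ichoose_natCast (a b : ℕ) : ichoose a b = a.choose b := by
  unfold ichoose
  split_ifs with h
  · simp
  · push_neg at h
    have hb : a < b := by exact_mod_cast h (by positivity)
    exact (Nat.choose_eq_zero_of_lt hb).symm

lemma ichoose_eq (a b : ℤ) (a' b' : ℕ) (ha : a = a') (hb : b = b') :
    ichoose a b = a'.choose b' := by
  subst ha; subst hb; exact ichoose_natCast a' b'

lemma ichoose_eq_zero {a b : ℤ} (h : ¬ b ≤ a) : ichoose a b = 0 := by
  unfold ichoose
  rw [if_neg]
  tauto

/-- The symmetric-cloning fidelity expression at `L = N` evaluates to the known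
global fidelity `C(M+d−1, M)/C(N+d−1, N)` of universal `M → N` cloning. -/
theorem symmetric_cloning_global_fidelity (d M N : ℕ) (hd : 2 ≤ d) (hM : 1 ≤ M)
    (hMN : M < N) :
    ((ichoose ((M : ℤ) + d - 1) (M : ℤ) : ℝ) / (ichoose ((N : ℤ) + d - 1) (M : ℤ) : ℝ)) *
      ∑ i ∈ Finset.range (M + 1),
        (ichoose (M : ℤ) (i : ℤ) : ℝ) * (ichoose ((N : ℤ) - M) ((M : ℤ) - i) : ℝ) *
          ∑ q ∈ Finset.Icc (0 : ℤ) ((N : ℤ) + i - 2 * M),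
            (ichoose ((N : ℤ) + i - 2 * M) q : ℝ) * (ichoose (2 * (M : ℤ) - i) ((N : ℤ) - q) : ℝ) /
              (ichoose ((M : ℤ) + d - 1 - i + q) ((d : ℤ) - 1) : ℝ)
    = (ichoose ((M : ℤ) + d - 1) (M : ℤ) : ℝ) / (ichoose ((N : ℤ) + d - 1) (N : ℤ) : ℝ) := by
  have hA : ichoose ((M : ℤ) + d - 1) (M : ℤ) = (M + d - 1).choose M :=
    ichoose_eq _ _ _ _ (by push_cast; omega) rfl
  have hB : ichoose ((N : ℤ) + d - 1) (M : ℤ) = (N + d - 1).choose M :=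
    ichoose_eq _ _ _ _ (by push_cast; omega) rfl
  have hC' : ichoose ((N : ℤ) + d - 1) (N : ℤ) = (N + d - 1).choose N :=
    ichoose_eq _ _ _ _ (by push_cast; omega) rfl
  rw [hA, hB, hC']
  set C : ℕ := (N - M + d - 1).choose (d - 1) with hCdef
  have hkey : ∀ i ∈ Finset.range (M + 1),
      (ichoose (M : ℤ) (i : ℤ) : ℝ) * (ichoose ((N : ℤ) - M) ((M : ℤ) - i) : ℝ) *
          ∑ q ∈ Finset.Icc (0 : ℤ) ((N : ℤ) + i - 2 * M),
            (ichoose ((N : ℤ) + i - 2 * M) q : ℝ) * (ichoose (2 * (M : ℤ) - i) ((N : ℤ) - q) : ℝ) /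
              (ichoose ((M : ℤ) + d - 1 - i + q) ((d : ℤ) - 1) : ℝ)
      = ((M.choose i : ℝ) * ((N - M).choose (M - i) : ℝ)) / (C : ℝ) := by
    intro i hi
    have hiM : i ≤ M := by simpa [Nat.lt_succ_iff] using Finset.mem_range.mp hi
    have h1 : ichoose (M : ℤ) (i : ℤ) = M.choose i := ichoose_natCast M i
    have h2 : ichoose ((N : ℤ) - M) ((M : ℤ) - i) = (N - M).choose (M - i) :=
      ichoose_eq _ _ _ _ (by push_cast; omega) (by push_cast; omega)
    rw [h1, h2]
    by_cases hcase : 2 * M ≤ N + i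
    · have hsum : ∑ q ∈ Finset.Icc (0 : ℤ) ((N : ℤ) + i - 2 * M),
          (ichoose ((N : ℤ) + i - 2 * M) q : ℝ) * (ichoose (2 * (M : ℤ) - i) ((N : ℤ) - q) : ℝ) /
            (ichoose ((M : ℤ) + d - 1 - i + q) ((d : ℤ) - 1) : ℝ)
          = 1 / (C : ℝ) := by
        rw [Finset.sum_eq_single_of_mem ((N : ℤ) + i - 2 * M)
          (by rw [Finset.mem_Icc]; omega)]
        · have e1 : ichoose ((N : ℤ) + i - 2 * M) ((N : ℤ) + i - 2 * M)
              = (N + i - 2 * M).choose (N + i - 2 * M) :=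
            ichoose_eq _ _ _ _ (by push_cast; omega) (by push_cast; omega)
          have e2 : ichoose (2 * (M : ℤ) - i) ((N : ℤ) - ((N : ℤ) + i - 2 * M))
              = (2 * M - i).choose (2 * M - i) :=
            ichoose_eq _ _ _ _ (by push_cast; omega) (by push_cast; omega)
          have e3 : ichoose ((M : ℤ) + d - 1 - i + ((N : ℤ) + i - 2 * M)) ((d : ℤ) - 1)
              = (N - M + d - 1).choose (d - 1) :=
            ichoose_eq _ _ _ _ (by push_cast; omega) (by push_cast; omega)
          rw [e1, e2, e3, Nat.choose_self, Nat.choose_self]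
          norm_num
          exact hCdef.symm
        · intro q hq hne
          have hq' := Finset.mem_Icc.mp hq
          have : ichoose (2 * (M : ℤ) - i) ((N : ℤ) - q) = 0 := by
            apply ichoose_eq_zero
            omega
          rw [this]
          simp
      rw [hsum]
      ring
    · have : (N - M).choose (M - i) = 0 := Nat.choose_eq_zero_of_lt (by omega)
      rw [this]
      simp
  rw [Finset.sum_congr rfl hkey, ← Finset.sum_div]
  have hvan : ∑ i ∈ Finset.range (M + 1), M.choose i * (N - M).choose (M - i)
      = N.choose M := by
    have := Nat.add_choose_eq M (N - M) M
    rw [Finset.Nat.sum_antidiagonal_eq_sum_range_succ_mk] at this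
    have hMN' : M + (N - M) = N := by omega
    rw [hMN'] at this
    simpa using this.symm
  have hsum_eq : (∑ i ∈ Finset.range (M + 1), (M.choose i : ℝ) * ((N - M).choose (M - i) : ℝ))
      = (N.choose M : ℝ) := by exact_mod_cast hvan
  rw [hsum_eq]
  -- key binomial identity
  have hnat : (N + d - 1).choose N * N.choose M = (N + d - 1).choose M * C := by
    have h := Nat.choose_mul (n := N + d - 1) (k := N) (s := M) (le_of_lt hMN)
    have hsym : (N + d - 1 - M).choose (N - M) = C := by
      have e : N + d - 1 - M = N - M + d - 1 := by omega
      rw [e, hCdef]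
      have hs := Nat.choose_symm (show d - 1 ≤ N - M + d - 1 by omega)
      rw [show N - M + d - 1 - (d - 1) = N - M by omega] at hs
      exact hs
    rw [hsym] at h
    exact h
  have hApos : 0 < (M + d - 1).choose M := Nat.choose_pos (by omega)
  have hBpos : 0 < (N + d - 1).choose M := Nat.choose_pos (by omega)
  have hC'pos : 0 < (N + d - 1).choose N := Nat.choose_pos (by omega)
  have hCpos : 0 < C := Nat.choose_pos (by omega)
  have hAr : (0 : ℝ) < ((M + d - 1).choose M : ℝ) := by exact_mod_cast hApos
  have hBr : (0 : ℝ) < ((N + d - 1).choose M : ℝ) := by exact_mod_cast hBpos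
  have hC'r : (0 : ℝ) < ((N + d - 1).choose N : ℝ) := by exact_mod_cast hC'pos
  have hCr : (0 : ℝ) < (C : ℝ) := by exact_mod_cast hCpos
  have hnatr : ((N + d - 1).choose N : ℝ) * (N.choose M : ℝ)
      = ((N + d - 1).choose M : ℝ) * (C : ℝ) := by exact_mod_cast hnat
  field_simp
  linear_combination hnatr
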